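/- For every n ≥ 3, there exists a connected (n−1)-regular simple graph G on 2n vertices whose smallest nontrivial normalized-Laplacian eigenvalue satisfies λ₁(G) ≤ 4/(n−1)². -/

import Mathlib

open SimpleGraph Finset

/-- The normalized Laplacian matrix `I - D^{-1/2} A D^{-1/2}` of a finite simple graph. -/
noncomputable def normLap {n : ℕ} (G : SimpleGraph (Fin n)) [DecidableRel G.Adj] :
    Matrix (Fin n) (Fin n) ℝ :=
  Matrix.of fun v w =>
    if v = w then (if G.degree v = 0 then 0 else 1)
    else if G.Adj v w then -((Real.sqrt (G.degree v) * Real.sqrt (G.degree w))⁻¹)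
    else 0

/-- The smallest nontrivial (nonzero) eigenvalue of the normalized Laplacian. -/
noncomputable def lambda1 {n : ℕ} (G : SimpleGraph (Fin n)) [DecidableRel G.Adj] : ℝ :=
  sInf {μ : ℝ | μ ≠ 0 ∧ μ ∈ spectrum ℝ (normLap G)}

/-- The degree sequence (as a multiset) of a finite simple graph. -/
def degSeq {n : ℕ} (G : SimpleGraph (Fin n)) [DecidableRel G.Adj] : Multiset ℕ :=
  Finset.univ.val.map fun v => G.degree v

/-- A multiset of natural numbers is graphic if it is the degree sequence of a simple graph. -/
def Graphic (π : Multiset ℕ) : Prop :=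
  ∃ (G : SimpleGraph (Fin (Multiset.card π))) (_ : DecidableRel G.Adj), degSeq G = π


def dumbAdj (n i k : ℕ) : Prop :=
  i ≠ k ∧ (((n ≤ i ↔ n ≤ k) ∧ i % n + k % n ≠ 1) ∨
    (¬(n ≤ i ↔ n ≤ k) ∧ i % n = k % n ∧ i % n < 2))

instance (n i k : ℕ) : Decidable (dumbAdj n i k) := by unfold dumbAdj; infer_instance

def dumbbell (n : ℕ) : SimpleGraph (Fin (2*n)) where
  Adj v w := dumbAdj n v.val w.val
  symm := by
    constructor
    rintro v w ⟨h1, h2⟩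
    refine ⟨h1.symm, ?_⟩
    rcases h2 with ⟨h3, h4⟩ | ⟨h3, h4, h5⟩
    · exact Or.inl ⟨h3.symm, by omega⟩
    · exact Or.inr ⟨fun h => h3 h.symm, h4.symm, h4 ▸ h5⟩
  loopless := ⟨fun v h => h.1 rfl⟩

instance (n : ℕ) : DecidableRel (dumbbell n).Adj :=
  fun v w => inferInstanceAs (Decidable (dumbAdj n v.val w.val))

lemma compl_sum (n j : ℕ) (hn : 3 ≤ n) (hj : j < n) (f : ℕ → ℝ) :
    ∑ k ∈ range n, (if j ≠ k ∧ j + k ≠ 1 then f k else 0)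
    = (∑ k ∈ range n, f k) - f j - (if j < 2 then f (1 - j) else 0) := by
  by_cases hj2 : j < 2
  · have hpt : ∀ k, (if j ≠ k ∧ j + k ≠ 1 then f k else 0)
        = f k - (if k = j then f k else 0) - (if k = 1 - j then f k else 0) := by
      intro k
      by_cases h1 : k = j
      · rw [if_neg (by omega : ¬(j ≠ k ∧ j + k ≠ 1)), if_pos h1,
          if_neg (by omega : ¬(k = 1 - j))]
        ring
      · by_cases h2 : k = 1 - j
        · rw [if_neg (by omega : ¬(j ≠ k ∧ j + k ≠ 1)), if_neg h1, if_pos h2]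
          ring
        · rw [if_pos (by omega : j ≠ k ∧ j + k ≠ 1), if_neg h1, if_neg h2]
          ring
    rw [Finset.sum_congr rfl (fun k _ => hpt k)]
    rw [Finset.sum_sub_distrib, Finset.sum_sub_distrib, Finset.sum_ite_eq',
      Finset.sum_ite_eq']
    simp [hj2, Finset.mem_range.mpr hj, Finset.mem_range.mpr (show 1 - j < n by omega)]
  · have hpt : ∀ k, (if j ≠ k ∧ j + k ≠ 1 then f k else 0)
        = f k - (if k = j then f k else 0) := by
      intro k
      by_cases h1 : k = j
      · rw [if_neg (by omega : ¬(j ≠ k ∧ j + k ≠ 1)), if_pos h1]; ring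
      · rw [if_pos (by omega : j ≠ k ∧ j + k ≠ 1), if_neg h1]; ring
    rw [Finset.sum_congr rfl (fun k _ => hpt k)]
    rw [Finset.sum_sub_distrib, Finset.sum_ite_eq']
    simp [hj2, Finset.mem_range.mpr hj]

lemma sum_adj_low (n : ℕ) (hn : 3 ≤ n) (v : Fin (2*n)) (hv : v.val < n) (f : ℕ → ℝ) :
    (∑ w : Fin (2*n), if (dumbbell n).Adj v w then f w.val else 0)
    = (∑ k ∈ range n, f k) - f v.val -
      (if v.val < 2 then f (1 - v.val) - f (n + v.val) else 0) := by
  set j := v.val with hjdef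
  have step1 : (∑ w : Fin (2*n), if (dumbbell n).Adj v w then f w.val else 0)
      = ∑ k ∈ range (2*n), (if dumbAdj n j k then f k else 0) :=
    Fin.sum_univ_eq_sum_range (fun k => if dumbAdj n j k then f k else 0) (2*n)
  rw [step1, two_mul, Finset.sum_range_add]
  have h1 : ∀ k ∈ range n, (if dumbAdj n j k then f k else 0)
      = (if j ≠ k ∧ j + k ≠ 1 then f k else 0) := by
    intro k hk
    rw [Finset.mem_range] at hk
    have : dumbAdj n j k ↔ (j ≠ k ∧ j + k ≠ 1) := by
      unfold dumbAdj
      rw [Nat.mod_eq_of_lt hv, Nat.mod_eq_of_lt hk]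
      constructor
      · rintro ⟨a, b | b⟩
        · exact ⟨a, b.2⟩
        · omega
      · rintro ⟨a, b⟩; exact ⟨a, Or.inl ⟨by omega, b⟩⟩
    rw [if_congr this rfl rfl]
  have h2 : ∀ k ∈ range n, (if dumbAdj n j (n + k) then f (n + k) else 0)
      = (if k = j ∧ j < 2 then f (n + k) else 0) := by
    intro k hk
    rw [Finset.mem_range] at hk
    have : dumbAdj n j (n + k) ↔ (k = j ∧ j < 2) := by
      unfold dumbAdj
      rw [Nat.mod_eq_of_lt hv, Nat.add_mod_left, Nat.mod_eq_of_lt hk]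
      constructor
      · rintro ⟨a, b | b⟩
        · omega
        · omega
      · rintro ⟨a, b⟩
        refine ⟨by omega, Or.inr ⟨by simp only [iff_iff_implies_and_implies]; omega,
          by omega, by omega⟩⟩
    rw [if_congr this rfl rfl]
  rw [Finset.sum_congr rfl h1, Finset.sum_congr rfl h2, compl_sum n j hn hv f]
  by_cases hj2 : j < 2
  · have : ∀ k ∈ range n, (if k = j ∧ j < 2 then f (n + k) else 0)
        = (if k = j then f (n + k) else 0) := fun k _ => by simp [hj2]
    rw [Finset.sum_congr rfl this, Finset.sum_ite_eq']
    simp [hj2, Finset.mem_range.mpr hv]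
    ring
  · have : ∀ k ∈ range n, (if k = j ∧ j < 2 then f (n + k) else 0) = 0 :=
      fun k _ => by simp [hj2]
    rw [Finset.sum_congr rfl this]
    simp [hj2]

lemma sum_adj_high (n : ℕ) (hn : 3 ≤ n) (v : Fin (2*n)) (hv : n ≤ v.val) (f : ℕ → ℝ) :
    (∑ w : Fin (2*n), if (dumbbell n).Adj v w then f w.val else 0)
    = (∑ k ∈ range n, f (n + k)) - f v.val -
      (if v.val - n < 2 then f (n + (1 - (v.val - n))) - f (v.val - n) else 0) := by
  obtain ⟨j, hvval⟩ : ∃ j, (v : ℕ) = n + j := ⟨v.val - n, by omega⟩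
  have hjn : j < n := by omega
  have step1 : (∑ w : Fin (2*n), if (dumbbell n).Adj v w then f w.val else 0)
      = ∑ k ∈ range (2*n), (if dumbAdj n v.val k then f k else 0) :=
    Fin.sum_univ_eq_sum_range (fun k => if dumbAdj n v.val k then f k else 0) (2*n)
  rw [step1, hvval]
  simp only [Nat.add_sub_cancel_left]
  rw [two_mul, Finset.sum_range_add]
  have hmod' : (n + j) % n = j := by rw [Nat.add_mod_left, Nat.mod_eq_of_lt hjn]
  have h1 : ∀ k ∈ range n, (if dumbAdj n (n + j) k then f k else 0)
      = (if k = j ∧ j < 2 then f k else 0) := by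
    intro k hk
    rw [Finset.mem_range] at hk
    have : dumbAdj n (n + j) k ↔ (k = j ∧ j < 2) := by
      unfold dumbAdj
      rw [hmod', Nat.mod_eq_of_lt hk]
      constructor
      · rintro ⟨a, b | b⟩ <;> omega
      · rintro ⟨a, b⟩
        refine ⟨by omega, Or.inr ⟨by simp only [iff_iff_implies_and_implies]; omega,
          by omega, by omega⟩⟩
    rw [if_congr this rfl rfl]
  have h2 : ∀ k ∈ range n, (if dumbAdj n (n + j) (n + k) then f (n + k) else 0)
      = (if j ≠ k ∧ j + k ≠ 1 then f (n + k) else 0) := by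
    intro k hk
    rw [Finset.mem_range] at hk
    have : dumbAdj n (n + j) (n + k) ↔ (j ≠ k ∧ j + k ≠ 1) := by
      unfold dumbAdj
      rw [hmod', Nat.add_mod_left, Nat.mod_eq_of_lt hk]
      constructor
      · rintro ⟨a, b | b⟩
        · exact ⟨by omega, b.2⟩
        · omega
      · rintro ⟨a, b⟩; exact ⟨by omega, Or.inl ⟨by omega, b⟩⟩
    rw [if_congr this rfl rfl]
  rw [Finset.sum_congr rfl h1, Finset.sum_congr rfl h2,
    compl_sum n j hn hjn (fun k => f (n + k))]
  by_cases hj2 : j < 2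
  · have : ∀ k ∈ range n, (if k = j ∧ j < 2 then f k else 0)
        = (if k = j then f k else 0) := fun k _ => by simp [hj2]
    rw [Finset.sum_congr rfl this, Finset.sum_ite_eq']
    simp only [hj2, if_true, Finset.mem_range.mpr hjn, hvval]
    ring
  · have : ∀ k ∈ range n, (if k = j ∧ j < 2 then f k else 0) = 0 :=
      fun k _ => by simp [hj2]
    rw [Finset.sum_congr rfl this]
    simp [hj2, hvval]
lemma adj_low {n i k : ℕ} (hi : i < n) (hk : k < n) (hne : i ≠ k) (h1 : i + k ≠ 1)
    {hi' : i < 2*n} {hk' : k < 2*n} : (dumbbell n).Adj ⟨i, hi'⟩ ⟨k, hk'⟩ := by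
  show dumbAdj n i k
  refine ⟨hne, Or.inl ⟨by omega, ?_⟩⟩
  rw [Nat.mod_eq_of_lt hi, Nat.mod_eq_of_lt hk]; exact h1

lemma adj_high {n i k : ℕ} (hi : n ≤ i) (hk : n ≤ k) (hi2 : i < 2*n) (hk2 : k < 2*n)
    (hne : i ≠ k) (h1 : (i-n) + (k-n) ≠ 1) :
    (dumbbell n).Adj ⟨i, hi2⟩ ⟨k, hk2⟩ := by
  show dumbAdj n i k
  refine ⟨hne, Or.inl ⟨by omega, ?_⟩⟩
  rw [Nat.mod_eq_sub_mod hi, Nat.mod_eq_sub_mod hk,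
    Nat.mod_eq_of_lt (by omega), Nat.mod_eq_of_lt (by omega)]
  exact h1

lemma adj_cross {n i : ℕ} (hi : i < 2) (hn : 3 ≤ n) {h1 : i < 2*n} {h2 : n + i < 2*n} :
    (dumbbell n).Adj ⟨i, h1⟩ ⟨n + i, h2⟩ := by
  show dumbAdj n i (n + i)
  have hmi : i % n = i := Nat.mod_eq_of_lt (by omega)
  have hmni : (n + i) % n = i := by rw [Nat.add_mod_left, hmi]
  refine ⟨by omega, Or.inr ⟨?_, by rw [hmi, hmni], by rw [hmi]; exact hi⟩⟩
  simp only [iff_iff_implies_and_implies]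
  omega

lemma dumbbell_connected (n : ℕ) (hn : 3 ≤ n) : (dumbbell n).Connected := by
  have h2n : 0 < 2*n := by omega
  rw [connected_iff]
  refine ⟨?_, ⟨⟨0, h2n⟩⟩⟩
  have key : ∀ w : Fin (2*n), (dumbbell n).Reachable ⟨0, h2n⟩ w := by
    intro w
    obtain ⟨wv, hwv⟩ := w
    have h0n : (dumbbell n).Adj ⟨0, h2n⟩ ⟨n + 0, by omega⟩ :=
      adj_cross (by omega) hn
    by_cases hlow : wv < n
    · rcases Nat.lt_or_ge wv 2 with hw2 | hw2
      · interval_cases wv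
        · exact Reachable.refl _
        · -- 0 - 2 - 1
          have a1 : (dumbbell n).Adj ⟨0, h2n⟩ ⟨2, by omega⟩ :=
            adj_low (by omega) (by omega) (by omega) (by omega)
          have a2 : (dumbbell n).Adj ⟨2, by omega⟩ ⟨1, hwv⟩ :=
            adj_low (by omega) (by omega) (by omega) (by omega)
          exact a1.reachable.trans a2.reachable
      · exact (adj_low (n := n) (by omega) hlow (by omega) (by omega)).reachable
    · push_neg at hlow
      by_cases hw1 : wv = n + 1
      · -- 0 - n - (n+2) - (n+1)
        have a1 : (dumbbell n).Adj ⟨n + 0, by omega⟩ ⟨n + 2, by omega⟩ :=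
          adj_high (by omega) (by omega) _ _ (by omega) (by omega)
        have a2 : (dumbbell n).Adj ⟨n + 2, by omega⟩ ⟨wv, hwv⟩ := by
          subst hw1; exact adj_high (by omega) (by omega) _ _ (by omega) (by omega)
        exact h0n.reachable.trans (a1.reachable.trans a2.reachable)
      · by_cases hw0 : wv = n
        · subst hw0; exact h0n.reachable
        · have a1 : (dumbbell n).Adj ⟨n + 0, by omega⟩ ⟨wv, hwv⟩ :=
            adj_high (by omega) (by omega) _ _ (by omega) (by omega)
          exact h0n.reachable.trans a1.reachable
  intro u v
  exact (key u).symm.trans (key v)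

noncomputable def lam (n : ℕ) : ℝ := ((n:ℝ) - 4 + Real.sqrt (((n:ℝ)+2)^2 - 16))/2

lemma lam_quad (n : ℕ) (hn : 3 ≤ n) :
    (lam n)^2 = ((n:ℝ) - 4) * lam n + (3*(n:ℝ) - 7) := by
  have hN : (3:ℝ) ≤ (n:ℝ) := by exact_mod_cast hn
  have hD : (0:ℝ) ≤ ((n:ℝ)+2)^2 - 16 := by nlinarith
  have hs := Real.sq_sqrt hD
  unfold lam
  linear_combination hs/4

lemma lam_lb (n : ℕ) (hn : 3 ≤ n) : ((n:ℝ) - 1) - 4/((n:ℝ)-1) ≤ lam n := by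
  have hN : (3:ℝ) ≤ (n:ℝ) := by exact_mod_cast hn
  have h1 : (0:ℝ) < (n:ℝ) - 1 := by linarith
  have hD : (0:ℝ) ≤ ((n:ℝ)+2)^2 - 16 := by nlinarith
  set u : ℝ := 8/((n:ℝ)-1) with hu
  have key : u * ((n:ℝ)-1) = 8 := by rw [hu]; field_simp
  have hu0 : 0 ≤ u := by positivity
  have hu4 : u ≤ 4 := by rw [hu, div_le_iff₀ h1]; linarith
  have hx : (0:ℝ) ≤ (n:ℝ) + 2 - u := by linarith
  have hsq : ((n:ℝ) + 2 - u)^2 ≤ ((n:ℝ)+2)^2 - 16 := by nlinarith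
  have hs' : (n:ℝ) + 2 - u ≤ Real.sqrt (((n:ℝ)+2)^2 - 16) :=
    (Real.le_sqrt hx hD).mpr hsq
  have step : ((n:ℝ) - 4 + ((n:ℝ) + 2 - u))/2 ≤ lam n := by
    unfold lam; linarith
  calc ((n:ℝ) - 1) - 4/((n:ℝ)-1) = ((n:ℝ) - 4 + ((n:ℝ) + 2 - u))/2 := by
        rw [hu]; ring
    _ ≤ lam n := step

lemma lam_ne (n : ℕ) (hn : 3 ≤ n) : lam n ≠ (n:ℝ) - 1 := by
  intro h
  have hq := lam_quad n hn
  rw [h] at hq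
  have hN : (3:ℝ) ≤ (n:ℝ) := by exact_mod_cast hn
  nlinarith

noncomputable def mu (n : ℕ) : ℝ := 1 - lam n / ((n:ℝ) - 1)

lemma mu_ne (n : ℕ) (hn : 3 ≤ n) : mu n ≠ 0 := by
  intro h
  have hN : (3:ℝ) ≤ (n:ℝ) := by exact_mod_cast hn
  have h1 : ((n:ℝ) - 1) ≠ 0 := by intro h'; linarith
  apply lam_ne n hn
  unfold mu at h
  field_simp at h
  linarith

lemma mu_le (n : ℕ) (hn : 3 ≤ n) : mu n ≤ 4 / ((n:ℝ) - 1)^2 := by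
  have hN : (3:ℝ) ≤ (n:ℝ) := by exact_mod_cast hn
  have h1 : (0:ℝ) < (n:ℝ) - 1 := by linarith
  have hlb := lam_lb n hn
  have h2 : (((n:ℝ)-1) - 4/((n:ℝ)-1)) / ((n:ℝ)-1) ≤ lam n / ((n:ℝ)-1) :=
    (div_le_div_iff_of_pos_right h1).mpr hlb
  have h3 : (((n:ℝ)-1) - 4/((n:ℝ)-1)) / ((n:ℝ)-1) = 1 - 4/((n:ℝ)-1)^2 := by
    field_simp
  unfold mu
  rw [h3] at h2
  linarith

noncomputable def gp (n : ℕ) : ℕ → ℝ := fun k => if k < 2 then ((n:ℝ)-2) else (lam n + 1)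

noncomputable def gfun (n : ℕ) : ℕ → ℝ :=
  fun k => (if n ≤ k then (-1:ℝ) else 1) * gp n (k % n)

noncomputable def gvec (n : ℕ) : Fin (2*n) → ℝ := fun w => gfun n w.val

lemma gfun_low {n k : ℕ} (hk : k < n) : gfun n k = gp n k := by
  unfold gfun
  rw [if_neg (not_le.mpr hk), Nat.mod_eq_of_lt hk, one_mul]

lemma gfun_high {n k : ℕ} (hk : k < n) : gfun n (n + k) = -gp n k := by
  unfold gfun
  rw [if_pos (by omega), Nat.add_mod_left, Nat.mod_eq_of_lt hk]
  ring

lemma sum_gp (n : ℕ) (hn : 3 ≤ n) :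
    ∑ k ∈ range n, gp n k = 2*((n:ℝ)-2) + ((n:ℝ)-2)*(lam n + 1) := by
  rw [Finset.range_eq_Ico, ← Finset.sum_Ico_consecutive _ (by omega : 0 ≤ 2) (by omega : 2 ≤ n)]
  have e1 : ∑ k ∈ Finset.Ico 0 2, gp n k = 2*((n:ℝ)-2) := by
    rw [← Finset.range_eq_Ico]
    rw [Finset.sum_range_succ, Finset.sum_range_succ, Finset.sum_range_zero]
    unfold gp
    norm_num
    ring
  have e2 : ∑ k ∈ Finset.Ico 2 n, gp n k = ((n:ℝ)-2)*(lam n + 1) := by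
    have hc : ∀ k ∈ Finset.Ico 2 n, gp n k = lam n + 1 := by
      intro k hk
      rw [Finset.mem_Ico] at hk
      unfold gp
      rw [if_neg (by omega)]
    rw [Finset.sum_congr rfl hc, Finset.sum_const, Nat.card_Ico, nsmul_eq_mul]
    rw [Nat.cast_sub (by omega : 2 ≤ n)]
    norm_num
  rw [e1, e2]

lemma dumbbell_degree (n : ℕ) (hn : 3 ≤ n) (v : Fin (2*n)) :
    (dumbbell n).degree v = n - 1 := by
  have hnat : (dumbbell n).degree v
      = ∑ w : Fin (2*n), (if (dumbbell n).Adj v w then 1 else 0) := by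
    rw [SimpleGraph.degree, SimpleGraph.neighborFinset_eq_filter, Finset.card_filter]
  have hR : ((dumbbell n).degree v : ℝ)
      = ∑ w : Fin (2*n), (if (dumbbell n).Adj v w then (1:ℝ) else 0) := by
    rw [hnat]
    push_cast
    rfl
  have hval : ((dumbbell n).degree v : ℝ) = (n:ℝ) - 1 := by
    by_cases hv : v.val < n
    · rw [sum_adj_low n hn v hv (fun _ => (1:ℝ))] at hR
      simp only [Finset.sum_const, Finset.card_range, nsmul_eq_mul, mul_one] at hR
      rw [hR]
      by_cases hv2 : v.val < 2 <;> simp [hv2]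
    · rw [sum_adj_high n hn v (le_of_not_gt hv) (fun _ => (1:ℝ))] at hR
      simp only [Finset.sum_const, Finset.card_range, nsmul_eq_mul, mul_one] at hR
      rw [hR]
      by_cases hv2 : v.val - n < 2 <;> simp [hv2]
  have : ((dumbbell n).degree v : ℝ) = ((n - 1 : ℕ) : ℝ) := by
    rw [hval, Nat.cast_sub (by omega : 1 ≤ n)]
    norm_num
  exact_mod_cast this

lemma sum_adj_gvec (n : ℕ) (hn : 3 ≤ n) (v : Fin (2*n)) :
    (∑ w : Fin (2*n), if (dumbbell n).Adj v w then gvec n w else 0)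
    = lam n * gvec n v := by
  have hq := lam_quad n hn
  have hS1 : ∑ k ∈ range n, gfun n k = 2*((n:ℝ)-2) + ((n:ℝ)-2)*(lam n + 1) := by
    rw [Finset.sum_congr rfl (fun k hk => gfun_low (Finset.mem_range.mp hk))]
    exact sum_gp n hn
  have hS2 : ∑ k ∈ range n, gfun n (n + k)
      = -(2*((n:ℝ)-2) + ((n:ℝ)-2)*(lam n + 1)) := by
    rw [Finset.sum_congr rfl (fun k hk => gfun_high (Finset.mem_range.mp hk))]
    rw [Finset.sum_neg_distrib, sum_gp n hn]
  have hsum : (∑ w : Fin (2*n), if (dumbbell n).Adj v w then gvec n w else 0)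
      = ∑ w : Fin (2*n), if (dumbbell n).Adj v w then gfun n w.val else 0 := rfl
  rw [hsum]
  show _ = lam n * gfun n v.val
  by_cases hv : v.val < n
  · rw [sum_adj_low n hn v hv (gfun n), hS1, gfun_low hv]
    by_cases hv2 : v.val < 2
    · rw [if_pos hv2, gfun_low (show 1 - v.val < n by omega), gfun_high hv]
      unfold gp
      rw [if_pos hv2, if_pos (show 1 - v.val < 2 by omega)]
      ring
    · rw [if_neg hv2]
      unfold gp
      rw [if_neg hv2]
      linear_combination (-1 : ℝ) * hq
  · obtain ⟨j, hvval⟩ : ∃ j, (v : ℕ) = n + j := ⟨v.val - n, by omega⟩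
    have hjn : j < n := by omega
    rw [sum_adj_high n hn v (le_of_not_gt hv) (gfun n), hS2, hvval]
    simp only [Nat.add_sub_cancel_left]
    rw [gfun_high hjn]
    by_cases hj2 : j < 2
    · rw [if_pos hj2, gfun_high (show 1 - j < n by omega), gfun_low hjn]
      unfold gp
      rw [if_pos hj2, if_pos (show 1 - j < 2 by omega)]
      ring
    · rw [if_neg hj2]
      unfold gp
      rw [if_neg hj2]
      linear_combination (1 : ℝ) * hq

lemma normLap_mulVec (n : ℕ) (hn : 3 ≤ n) :
    (normLap (dumbbell n)).mulVec (gvec n) = mu n • gvec n := by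
  have hN : (3:ℝ) ≤ (n:ℝ) := by exact_mod_cast hn
  have hdegR : ∀ u : Fin (2*n), (((dumbbell n).degree u : ℝ)) = (n:ℝ) - 1 := by
    intro u
    rw [dumbbell_degree n hn u, Nat.cast_sub (by omega : 1 ≤ n)]
    norm_num
  have hdeg0 : ∀ u : Fin (2*n), ¬((dumbbell n).degree u = 0) := by
    intro u
    rw [dumbbell_degree n hn u]
    omega
  funext v
  have hpt : ∀ w, normLap (dumbbell n) v w * gvec n w
      = (if v = w then gvec n w else 0)
        + (-(((n:ℝ)-1)⁻¹)) * (if (dumbbell n).Adj v w then gvec n w else 0) := by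
    intro w
    unfold normLap
    rw [Matrix.of_apply]
    by_cases hvw : v = w
    · rw [if_pos hvw, if_pos hvw, if_neg (hdeg0 v), if_neg (by rw [hvw] at *; exact (dumbbell n).irrefl)]
      ring
    · rw [if_neg hvw, if_neg hvw]
      by_cases hadj : (dumbbell n).Adj v w
      · rw [if_pos hadj, if_pos hadj, hdegR v, hdegR w,
          Real.mul_self_sqrt (by linarith : (0:ℝ) ≤ (n:ℝ) - 1)]
        ring
      · rw [if_neg hadj, if_neg hadj]
        ring
  show ∑ w, normLap (dumbbell n) v w * gvec n w = mu n • gvec n v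
  rw [Finset.sum_congr rfl (fun w _ => hpt w), Finset.sum_add_distrib,
    ← Finset.mul_sum, Finset.sum_ite_eq, sum_adj_gvec n hn v]
  simp only [Finset.mem_univ, if_true, smul_eq_mul]
  unfold mu
  ring

lemma gvec_ne_zero (n : ℕ) (hn : 3 ≤ n) : gvec n ≠ 0 := by
  intro h
  have h2n : 0 < 2*n := by omega
  have h0 := congrFun h ⟨0, h2n⟩
  have : gvec n ⟨0, h2n⟩ = (n:ℝ) - 2 := by
    show gfun n 0 = _
    unfold gfun gp
    rw [if_neg (by omega : ¬ n ≤ 0), Nat.zero_mod, if_pos (by omega : 0 < 2), one_mul]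
  rw [this] at h0
  have hN : (3:ℝ) ≤ (n:ℝ) := by exact_mod_cast hn
  simp only [Pi.zero_apply] at h0
  linarith

lemma mu_mem_spectrum (n : ℕ) (hn : 3 ≤ n) :
    mu n ∈ spectrum ℝ (normLap (dumbbell n)) := by
  rw [spectrum.mem_iff]
  intro hunit
  set M := algebraMap ℝ (Matrix (Fin (2*n)) (Fin (2*n)) ℝ) (mu n) - normLap (dumbbell n)
    with hM
  have hMg : M.mulVec (gvec n) = 0 := by
    rw [hM, Matrix.sub_mulVec, Algebra.algebraMap_eq_smul_one, Matrix.smul_mulVec,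
      Matrix.one_mulVec, normLap_mulVec n hn, sub_self]
  obtain ⟨u, hu⟩ := hunit
  have : gvec n = 0 := by
    have h1 : ((↑u⁻¹ : Matrix (Fin (2*n)) (Fin (2*n)) ℝ) * M).mulVec (gvec n) = gvec n := by
      rw [← hu, ← Units.val_mul, inv_mul_cancel, Units.val_one, Matrix.one_mulVec]
    rw [← h1, ← Matrix.mulVec_mulVec, hMg, Matrix.mulVec_zero]
  exact gvec_ne_zero n hn this
/-- For every `n ≥ 3` there is a connected `(n-1)`-regular graph on `2n` vertices with
`λ₁(G) ≤ 4/(n-1)²`. -/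
theorem regular_small_gap_exists (n : ℕ) (hn : 3 ≤ n) :
    ∃ (G : SimpleGraph (Fin (2 * n))) (_ : DecidableRel G.Adj),
      G.Connected ∧ (∀ v, G.degree v = n - 1) ∧
      lambda1 G ≤ 4 / ((n : ℝ) - 1) ^ 2 := by
  have hN : (3:ℝ) ≤ (n:ℝ) := by exact_mod_cast hn
  refine ⟨dumbbell n, inferInstance, dumbbell_connected n hn, dumbbell_degree n hn, ?_⟩
  have hmuS : mu n ∈ {μ : ℝ | μ ≠ 0 ∧ μ ∈ spectrum ℝ (normLap (dumbbell n))} :=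
    ⟨mu_ne n hn, mu_mem_spectrum n hn⟩
  unfold lambda1
  by_cases hb : BddBelow {μ : ℝ | μ ≠ 0 ∧ μ ∈ spectrum ℝ (normLap (dumbbell n))}
  · exact le_trans (csInf_le hb hmuS) (mu_le n hn)
  · rw [Real.sInf_of_not_bddBelow hb]
    positivity
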